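/- arXiv:2605.08677 — 2 statements merged into one kernel-verified Lean document; each statement's English description precedes it below -/
import Mathlib

section
/- Let $B, A \in \mathbb{R}^{n \times k}$ and let $B^\top A = U \Sigma V^\top$ be a singular value decomposition of $B^\top A$. Then $Q = U V^\top$ is a minimizer of $\|A - B Q\|_F$ over $Q \in O(k)$. -/
open Matrix

/-- Frobenius norm of a real matrix. -/
noncomputable def frob {n k : ℕ} (A : Matrix (Fin n) (Fin k) ℝ) : ℝ :=
  Real.sqrt (∑ i, ∑ j, (A i j) ^ 2)

lemma star_eq_transpose_real {k : ℕ} (M : Matrix (Fin k) (Fin k) ℝ) : star M = Mᵀ := by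
  ext i j
  simp [Matrix.star_eq_conjTranspose, Matrix.conjTranspose_apply]

lemma orth_mul_transpose {k : ℕ} {Q : Matrix (Fin k) (Fin k) ℝ}
    (h : Q ∈ Matrix.orthogonalGroup (Fin k) ℝ) : Q * Qᵀ = 1 := by
  rw [Matrix.mem_orthogonalGroup_iff] at h
  exact h

lemma orth_transpose_mul {k : ℕ} {Q : Matrix (Fin k) (Fin k) ℝ}
    (h : Q ∈ Matrix.orthogonalGroup (Fin k) ℝ) : Qᵀ * Q = 1 := by
  rw [Matrix.mem_orthogonalGroup_iff'] at h
  exact h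

lemma frob_sq {n k : ℕ} (M : Matrix (Fin n) (Fin k) ℝ) :
    ∑ i, ∑ j, (M i j) ^ 2 = Matrix.trace (Mᵀ * M) := by
  rw [Finset.sum_comm]
  simp [Matrix.trace, Matrix.diag, Matrix.mul_apply, sq]

lemma cancel_left {k : ℕ} {X : Matrix (Fin k) (Fin k) ℝ} (h : X * Xᵀ = 1) :
    ∀ m : ℕ, ∀ M : Matrix (Fin k) (Fin m) ℝ, X * (Xᵀ * M) = M := by
  intro m M; rw [← Matrix.mul_assoc, h, Matrix.one_mul]

lemma cancel_left' {k : ℕ} {X : Matrix (Fin k) (Fin k) ℝ} (h : Xᵀ * X = 1) :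
    ∀ m : ℕ, ∀ M : Matrix (Fin k) (Fin m) ℝ, Xᵀ * (X * M) = M := by
  intro m M; rw [← Matrix.mul_assoc, h, Matrix.one_mul]

/-- if `Bᵀ A = U Σ Vᵀ` is a singular value decomposition, then
`Q = U Vᵀ` minimizes `‖A - B Q‖_F` over the orthogonal group `O(k)`. -/
theorem stmt_2 {n k : ℕ} (A B : Matrix (Fin n) (Fin k) ℝ)
    (U V : Matrix (Fin k) (Fin k) ℝ)
    (hU : U ∈ Matrix.orthogonalGroup (Fin k) ℝ)
    (hV : V ∈ Matrix.orthogonalGroup (Fin k) ℝ)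
    (S : Fin k → ℝ) (hS : ∀ i, 0 ≤ S i)
    (hSVD : Bᵀ * A = U * Matrix.diagonal S * Vᵀ) :
    U * Vᵀ ∈ Matrix.orthogonalGroup (Fin k) ℝ ∧
      ∀ Q' ∈ Matrix.orthogonalGroup (Fin k) ℝ,
        frob (A - B * (U * Vᵀ)) ≤ frob (A - B * Q') := by
  have hQmem : U * Vᵀ ∈ Matrix.orthogonalGroup (Fin k) ℝ := by
    rw [Matrix.mem_orthogonalGroup_iff]
    rw [Matrix.transpose_mul, Matrix.transpose_transpose]
    calc U * Vᵀ * (V * Uᵀ) = U * (Vᵀ * (V * Uᵀ)) := by rw [Matrix.mul_assoc]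
      _ = U * Uᵀ := by rw [cancel_left' (orth_transpose_mul hV)]
      _ = 1 := orth_mul_transpose hU
  refine ⟨hQmem, ?_⟩
  intro Q' hQ'
  -- expansion of the squared Frobenius norm
  have expand : ∀ Q : Matrix (Fin k) (Fin k) ℝ, Q * Qᵀ = 1 →
      ∑ i, ∑ j, ((A - B * Q) i j) ^ 2
        = Matrix.trace (Aᵀ * A) + Matrix.trace (Bᵀ * B)
          - 2 * Matrix.trace (Qᵀ * (Bᵀ * A)) := by
    intro Q hQ
    rw [frob_sq]
    have h1 : (A - B * Q)ᵀ * (A - B * Q)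
        = Aᵀ * A - Aᵀ * (B * Q) - ((B * Q)ᵀ * A - (B * Q)ᵀ * (B * Q)) := by
      rw [Matrix.transpose_sub, Matrix.sub_mul, Matrix.mul_sub, Matrix.mul_sub]
    have h2 : Matrix.trace (Aᵀ * (B * Q)) = Matrix.trace (Qᵀ * (Bᵀ * A)) := by
      rw [← Matrix.trace_transpose (Aᵀ * (B * Q))]
      congr 1
      rw [Matrix.transpose_mul, Matrix.transpose_transpose, Matrix.transpose_mul,
        Matrix.mul_assoc]
    have h3 : Matrix.trace ((B * Q)ᵀ * A) = Matrix.trace (Qᵀ * (Bᵀ * A)) := by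
      rw [Matrix.transpose_mul, Matrix.mul_assoc]
    have h4 : Matrix.trace ((B * Q)ᵀ * (B * Q)) = Matrix.trace (Bᵀ * B) := by
      rw [Matrix.transpose_mul, Matrix.mul_assoc, Matrix.trace_mul_comm]
      rw [Matrix.mul_assoc, Matrix.mul_assoc, hQ, Matrix.mul_one]
    rw [h1, Matrix.trace_sub, Matrix.trace_sub, Matrix.trace_sub, h2, h3, h4]
    ring
  -- the trace term for the optimal Q
  have hTopt : Matrix.trace ((U * Vᵀ)ᵀ * (Bᵀ * A)) = ∑ i, S i := by
    rw [hSVD, Matrix.transpose_mul, Matrix.transpose_transpose]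
    have : V * Uᵀ * (U * Matrix.diagonal S * Vᵀ)
        = V * (Matrix.diagonal S * Vᵀ) := by
      rw [Matrix.mul_assoc U, Matrix.mul_assoc V Uᵀ, cancel_left' (orth_transpose_mul hU)]
    rw [this, ← Matrix.mul_assoc, Matrix.trace_mul_comm, cancel_left' (orth_transpose_mul hV)]
    simp [Matrix.trace, Matrix.diag]
  -- the trace term for an arbitrary orthogonal Q'
  set W : Matrix (Fin k) (Fin k) ℝ := Vᵀ * (Q'ᵀ * U) with hW
  have hTQ' : Matrix.trace (Q'ᵀ * (Bᵀ * A)) = ∑ i, W i i * S i := by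
    rw [hSVD, ← Matrix.mul_assoc Q'ᵀ, Matrix.trace_mul_comm]
    have : Vᵀ * (Q'ᵀ * (U * Matrix.diagonal S)) = W * Matrix.diagonal S := by
      simp only [hW, Matrix.mul_assoc]
    rw [this]
    simp [Matrix.trace, Matrix.diag, Matrix.mul_diagonal]
  -- W is orthogonal, hence its diagonal entries are at most 1
  have hWW : W * Wᵀ = 1 := by
    have hWt : Wᵀ = Uᵀ * (Q' * V) := by
      rw [hW]
      simp [Matrix.transpose_mul, Matrix.mul_assoc]
    calc W * Wᵀ = Vᵀ * (Q'ᵀ * (U * (Uᵀ * (Q' * V)))) := by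
          rw [hWt]; simp only [hW, Matrix.mul_assoc]
      _ = Vᵀ * (Q'ᵀ * (Q' * V)) := by rw [cancel_left (orth_mul_transpose hU)]
      _ = Vᵀ * V := by rw [cancel_left' (orth_transpose_mul hQ')]
      _ = 1 := orth_transpose_mul hV
  have hdiag : ∀ i, W i i ≤ 1 := by
    intro i
    have h1 : ∑ j, W i j * W i j = 1 := by
      have := congrFun (congrFun hWW i) i
      simpa [Matrix.mul_apply, Matrix.one_apply] using this
    have h2 : W i i * W i i ≤ 1 := by
      rw [← h1]
      exact Finset.single_le_sum (fun j _ => mul_self_nonneg (W i j)) (Finset.mem_univ i)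
    nlinarith
  have hle : Matrix.trace (Q'ᵀ * (Bᵀ * A)) ≤ Matrix.trace ((U * Vᵀ)ᵀ * (Bᵀ * A)) := by
    rw [hTQ', hTopt]
    refine Finset.sum_le_sum fun i _ => ?_
    calc W i i * S i ≤ 1 * S i := mul_le_mul_of_nonneg_right (hdiag i) (hS i)
      _ = S i := one_mul _
  unfold frob
  apply Real.sqrt_le_sqrt
  rw [expand _ (orth_mul_transpose hQmem), expand _ (orth_mul_transpose hQ')]
  linarith
end

section
/- Suppose self-loops are observed, i.e., $\Theta_{ij} = \alpha_i + \alpha_j + \langle z_i, z_j\rangle$ is known for all $1 \le i \le j \le n$ (including $i = j$). If $[Z^\star, \alpha^\star]$ and $[\tilde Z, \tilde\alpha]$ give $\Theta^\star_{ij} = \tilde\Theta_{ij}$ for all $i \le j$, equivalently $Z^\star Z^{\star\top} + \alpha^\star 1_n^\top + 1_n\alpha^{\star\top} = \tilde Z\tilde Z^\top + \tilde\alpha 1_n^\top + 1_n\tilde\alpha^\top$, and additionally $1_n^\top Z^\star = 1_n^\top \tilde Z = 0$ and $\mathrm{rank}(Z^\star) = k$ with $n \ge k+2$, then $\tilde\alpha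 = \alpha^\star$ and there exists $Q \in O(k)$ with $\tilde Z = Z^\star Q$. -/
open Matrix

lemma aux_isUnit {k : ℕ} (A : Matrix (Fin k) (Fin k) ℝ) (h : A.rank = k) : IsUnit A := by
  rw [← Matrix.mulVec_injective_iff_isUnit]
  have hs : Function.Surjective A.mulVecLin := by
    rw [← LinearMap.range_eq_top]
    apply Submodule.eq_top_of_finrank_eq
    rw [← Matrix.rank, h]
    simp
  have hi : Function.Injective A.mulVecLin :=
    (LinearMap.injective_iff_surjective).mpr hs
  exact hi

/-- identifiability with self-loops. If
`Z⋆Z^{⋆⊤} + α⋆1ᵀ + 1α^{⋆⊤} = Z̃Z̃ᵀ + α̃1ᵀ + 1α̃ᵀ`, both latent matrices are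
centered, `Z⋆` has full column rank `k`, and `n ≥ k + 2`, then `α̃ = α⋆` and
`Z̃ = Z⋆ Q` for some orthogonal `Q`. -/
theorem stmt_12 {n k : ℕ} (hn : k + 2 ≤ n)
    (Zs tZ : Matrix (Fin n) (Fin k) ℝ) (αs tα : Fin n → ℝ)
    (hΘ : Zs * Zsᵀ + Matrix.of (fun i j => αs i + αs j)
        = tZ * tZᵀ + Matrix.of (fun i j => tα i + tα j))
    (hcen : (fun _ => (1 : ℝ)) ᵥ* Zs = 0)
    (htcen : (fun _ => (1 : ℝ)) ᵥ* tZ = 0)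
    (hrank : Zs.rank = k) :
    tα = αs ∧ ∃ Q ∈ Matrix.orthogonalGroup (Fin k) ℝ, tZ = Zs * Q := by
  have hn0 : (n : ℝ) ≠ 0 := by
    have : 0 < n := by omega
    exact_mod_cast this.ne'
  -- step 1: α equality
  have h1 := congrArg (fun M => (fun _ => (1:ℝ)) ᵥ* M) hΘ
  simp only [Matrix.vecMul_add, ← Matrix.vecMul_vecMul, hcen, htcen,
    Matrix.zero_vecMul, zero_add] at h1
  have key : ∀ j, (∑ i, αs i) + n * αs j = (∑ i, tα i) + n * tα j := by
    intro j
    have h2 := congrFun h1 j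
    simp only [Matrix.vecMul, dotProduct, Matrix.of_apply, one_mul,
      Finset.sum_add_distrib, Finset.sum_const, Finset.card_fin, nsmul_eq_mul] at h2
    exact h2
  have hsum : (∑ i, αs i) = ∑ i, tα i := by
    have h3 := Finset.sum_congr rfl (fun j (_ : j ∈ Finset.univ) => key j)
    push_cast at h3
    simp only [Finset.sum_add_distrib, Finset.sum_const, Finset.card_fin,
      nsmul_eq_mul, ← Finset.mul_sum] at h3
    have h5 : (n:ℝ) * (∑ i, αs i) = n * (∑ i, tα i) := by linarith
    exact mul_left_cancel₀ hn0 h5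
  have hα : tα = αs := by
    funext j
    have := key j
    rw [hsum] at this
    have h4 : (n : ℝ) * αs j = n * tα j := by linarith
    exact (mul_left_cancel₀ hn0 h4).symm
  -- step 2: Gram equality
  have hG : Zs * Zsᵀ = tZ * tZᵀ := by
    have hE : (Matrix.of (fun i j => αs i + αs j) : Matrix (Fin n) (Fin n) ℝ)
        = Matrix.of (fun i j => tα i + tα j) := by rw [hα]
    rw [hE] at hΘ
    exact add_right_cancel hΘ
  -- step 3: invertibility of A = Zsᵀ * Zs
  set A := Zsᵀ * Zs with hAdef
  have hAunit : IsUnit A := aux_isUnit A (by rw [hAdef, Matrix.rank_transpose_mul_self, hrank])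
  have hAdet : IsUnit A.det := (Matrix.isUnit_iff_isUnit_det A).mp hAunit
  have hAsymm : Aᵀ = A := by rw [hAdef, Matrix.transpose_mul, Matrix.transpose_transpose]
  set L := A⁻¹ * Zsᵀ with hLdef
  have hLZ : L * Zs = 1 := by
    rw [hLdef, Matrix.mul_assoc, ← hAdef, Matrix.nonsing_inv_mul A hAdet]
  have hLt : Lᵀ = Zs * A⁻¹ := by
    rw [hLdef, Matrix.transpose_mul, Matrix.transpose_transpose,
      Matrix.transpose_nonsing_inv, hAsymm]
  -- P := Zs * L is symmetric projection
  have hPG : (Zs * L) * (tZ * tZᵀ) = tZ * tZᵀ := by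
    rw [← hG]
    calc (Zs * L) * (Zs * Zsᵀ) = Zs * (L * Zs) * Zsᵀ := by
          simp [Matrix.mul_assoc]
      _ = Zs * Zsᵀ := by rw [hLZ, Matrix.mul_one]
  have hGP : (tZ * tZᵀ) * (Zs * L)ᵀ = tZ * tZᵀ := by
    have := congrArg Matrix.transpose hPG
    simpa [Matrix.transpose_mul, Matrix.mul_assoc] using this
  -- show Zs * L * tZ = tZ
  have hPtZ : Zs * L * tZ = tZ := by
    have hB : (Zs * L * tZ - tZ) * (Zs * L * tZ - tZ)ᵀ = 0 := by
      rw [Matrix.transpose_sub, Matrix.sub_mul, Matrix.mul_sub, Matrix.mul_sub]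
      have e1 : Zs * L * tZ * (Zs * L * tZ)ᵀ = tZ * tZᵀ := by
        rw [Matrix.transpose_mul]
        calc Zs * L * tZ * (tZᵀ * (Zs * L)ᵀ)
            = (Zs * L) * ((tZ * tZᵀ) * (Zs * L)ᵀ) := by simp [Matrix.mul_assoc]
          _ = (Zs * L) * (tZ * tZᵀ) := by rw [hGP]
          _ = tZ * tZᵀ := hPG
      have e2 : Zs * L * tZ * tZᵀ = tZ * tZᵀ := by
        rw [Matrix.mul_assoc, hPG]
      have e3 : tZ * (Zs * L * tZ)ᵀ = tZ * tZᵀ := by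
        rw [Matrix.transpose_mul]
        calc tZ * (tZᵀ * (Zs * L)ᵀ) = (tZ * tZᵀ) * (Zs * L)ᵀ := by
              simp [Matrix.mul_assoc]
          _ = tZ * tZᵀ := hGP
      rw [e1, e2, e3]
      simp
    have hB' : (Zs * L * tZ - tZ) * (Zs * L * tZ - tZ)ᴴ = 0 := by
      rwa [Matrix.conjTranspose_eq_transpose_of_trivial]
    exact sub_eq_zero.mp (Matrix.self_mul_conjTranspose_eq_zero.mp hB')
  refine ⟨hα, L * tZ, ?_, by rw [← Matrix.mul_assoc]; exact hPtZ.symm⟩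
  rw [Matrix.mem_orthogonalGroup_iff]
  have hstar : star (L * tZ) = (L * tZ)ᵀ := by
    rw [Matrix.star_eq_conjTranspose, Matrix.conjTranspose_eq_transpose_of_trivial]
  rw [Matrix.transpose_mul]
  calc L * tZ * (tZᵀ * Lᵀ) = L * (tZ * tZᵀ) * Lᵀ := by
        rw [← Matrix.mul_assoc (L * tZ) tZᵀ Lᵀ, Matrix.mul_assoc L tZ tZᵀ]
    _ = L * (Zs * Zsᵀ) * Lᵀ := by rw [hG]
    _ = (L * Zs) * (L * Zs)ᵀ := by
          rw [Matrix.transpose_mul L Zs, ← Matrix.mul_assoc L Zs Zsᵀ, Matrix.mul_assoc (L * Zs)]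
    _ = 1 := by rw [hLZ, Matrix.transpose_one, Matrix.one_mul]
end
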